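/- For the two-component univariate Gaussian mixture density f_{α,μ,σ}, the parameters are non-identifiable exactly in the trivial cases: f_{α,μ,σ} equals a single Gaussian density N(m, s²) for some m, s if and only if α = 0, or α = 1, or (μ₁,σ₁) = (μ₂,σ₂). -/

import Mathlib

open Real

open Filter Topology in
private lemma quad_tendsto_atBot {a b c : ℝ} (ha : a < 0) :
    Tendsto (fun x : ℝ => a * x ^ 2 + b * x + c) atTop atBot := by
  have ha' : a ≠ 0 := ne_of_lt ha
  have h : (fun x : ℝ => a * x ^ 2 + b * x + c)
      = fun x : ℝ => a * (x + b / (2 * a)) ^ 2 + (c - b ^ 2 / (4 * a)) := by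
    funext x
    field_simp
    ring
  rw [h]
  apply tendsto_atBot_add_const_right
  exact Tendsto.const_mul_atTop_of_neg ha
    ((tendsto_pow_atTop two_ne_zero).comp (tendsto_atTop_add_const_right _ _ tendsto_id))

open Filter Topology in
private lemma quad_tendsto_atTop {a b c : ℝ} (ha : 0 < a) :
    Tendsto (fun x : ℝ => a * x ^ 2 + b * x + c) atTop atTop := by
  have ha' : a ≠ 0 := ne_of_gt ha
  have h : (fun x : ℝ => a * x ^ 2 + b * x + c)
      = fun x : ℝ => a * (x + b / (2 * a)) ^ 2 + (c - b ^ 2 / (4 * a)) := by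
    funext x
    field_simp
    ring
  rw [h]
  apply tendsto_atTop_add_const_right
  exact Tendsto.const_mul_atTop ha
    ((tendsto_pow_atTop two_ne_zero).comp (tendsto_atTop_add_const_right _ _ tendsto_id))

open Filter Topology in
/-- A quadratic bounded above has nonpositive leading coefficient, and if the leading
coefficient vanishes so does the linear one. -/
private lemma quad_bounded {a b c M : ℝ} (h : ∀ x : ℝ, a * x ^ 2 + b * x + c ≤ M) :
    a < 0 ∨ (a = 0 ∧ b = 0) := by
  rcases lt_trichotomy a 0 with ha | ha | ha
  · exact Or.inl ha
  · subst ha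
    refine Or.inr ⟨rfl, ?_⟩
    by_contra hb
    have := h ((M - c + 1) / b)
    have hx : b * ((M - c + 1) / b) = M - c + 1 := by field_simp
    simp only [zero_mul, zero_add, hx] at this
    linarith
  · exfalso
    obtain ⟨x, hx⟩ := ((quad_tendsto_atTop (b := b) (c := c) ha).eventually_gt_atTop M).exists
    exact absurd (h x) (not_le.mpr hx)

open Filter Topology in
/-- If a positive combination of two exponentials of quadratics is constant, both quadratics
are constant. -/
private lemma two_exp_const {A B C a₁ b₁ c₁ a₂ b₂ c₂ : ℝ} (hA : 0 < A) (hB : 0 < B)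
    (h : ∀ x : ℝ, A * Real.exp (a₁ * x ^ 2 + b₁ * x + c₁)
        + B * Real.exp (a₂ * x ^ 2 + b₂ * x + c₂) = C) :
    a₁ = 0 ∧ b₁ = 0 ∧ a₂ = 0 ∧ b₂ = 0 := by
  have hC : 0 < C := by
    have := h 0
    nlinarith [Real.exp_pos (a₁ * (0:ℝ) ^ 2 + b₁ * 0 + c₁),
      Real.exp_pos (a₂ * (0:ℝ) ^ 2 + b₂ * 0 + c₂)]
  -- each quadratic is bounded above
  have hb1 : ∀ x : ℝ, a₁ * x ^ 2 + b₁ * x + c₁ ≤ Real.log (C / A) := by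
    intro x
    have h1 := h x
    have h2 : A * Real.exp (a₁ * x ^ 2 + b₁ * x + c₁) ≤ C := by
      nlinarith [Real.exp_pos (a₂ * x ^ 2 + b₂ * x + c₂)]
    have h3 : Real.exp (a₁ * x ^ 2 + b₁ * x + c₁) ≤ C / A := by
      rw [le_div_iff₀ hA]; linarith
    calc a₁ * x ^ 2 + b₁ * x + c₁ = Real.log (Real.exp (a₁ * x ^ 2 + b₁ * x + c₁)) :=
          (Real.log_exp _).symm
      _ ≤ Real.log (C / A) := Real.log_le_log (Real.exp_pos _) h3
  have hb2 : ∀ x : ℝ, a₂ * x ^ 2 + b₂ * x + c₂ ≤ Real.log (C / B) := by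
    intro x
    have h1 := h x
    have h2 : B * Real.exp (a₂ * x ^ 2 + b₂ * x + c₂) ≤ C := by
      nlinarith [Real.exp_pos (a₁ * x ^ 2 + b₁ * x + c₁)]
    have h3 : Real.exp (a₂ * x ^ 2 + b₂ * x + c₂) ≤ C / B := by
      rw [le_div_iff₀ hB]; linarith
    calc a₂ * x ^ 2 + b₂ * x + c₂ = Real.log (Real.exp (a₂ * x ^ 2 + b₂ * x + c₂)) :=
          (Real.log_exp _).symm
      _ ≤ Real.log (C / B) := Real.log_le_log (Real.exp_pos _) h3
  have t1 := quad_bounded hb1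
  have t2 := quad_bounded hb2
  -- limits of the exponential terms
  have lim1 : a₁ < 0 → Tendsto (fun x : ℝ => A * Real.exp (a₁ * x ^ 2 + b₁ * x + c₁))
      atTop (𝓝 0) := by
    intro ha
    have := (Real.tendsto_exp_atBot).comp (quad_tendsto_atBot (b := b₁) (c := c₁) ha)
    simpa using (this.const_mul A)
  have lim2 : a₂ < 0 → Tendsto (fun x : ℝ => B * Real.exp (a₂ * x ^ 2 + b₂ * x + c₂))
      atTop (𝓝 0) := by
    intro ha
    have := (Real.tendsto_exp_atBot).comp (quad_tendsto_atBot (b := b₂) (c := c₂) ha)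
    simpa using (this.const_mul B)
  rcases t1 with ha1 | ⟨ha1, hb1'⟩
  · exfalso
    rcases t2 with ha2 | ⟨ha2, hb2'⟩
    · -- both tend to 0, so C = 0
      have : Tendsto (fun x : ℝ => A * Real.exp (a₁ * x ^ 2 + b₁ * x + c₁)
          + B * Real.exp (a₂ * x ^ 2 + b₂ * x + c₂)) atTop (𝓝 0) := by
        simpa using (lim1 ha1).add (lim2 ha2)
      rw [funext h] at this
      have := tendsto_nhds_unique this tendsto_const_nhds
      linarith
    · -- second term is constant B * exp c₂, first tends to 0
      subst ha2; subst hb2'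
      have hconst : ∀ x : ℝ, A * Real.exp (a₁ * x ^ 2 + b₁ * x + c₁) = C - B * Real.exp c₂ := by
        intro x
        have := h x
        simp only [zero_mul, zero_add] at this ⊢
        linarith
      have : Tendsto (fun x : ℝ => A * Real.exp (a₁ * x ^ 2 + b₁ * x + c₁)) atTop
          (𝓝 (C - B * Real.exp c₂)) := by
        rw [funext hconst]; exact tendsto_const_nhds
      have h0 : C - B * Real.exp c₂ = 0 := tendsto_nhds_unique this (lim1 ha1)
      have := hconst 0
      nlinarith [Real.exp_pos (a₁ * (0:ℝ) ^ 2 + b₁ * 0 + c₁)]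
  · rcases t2 with ha2 | ⟨ha2, hb2'⟩
    · exfalso
      subst ha1; subst hb1'
      have hconst : ∀ x : ℝ, B * Real.exp (a₂ * x ^ 2 + b₂ * x + c₂) = C - A * Real.exp c₁ := by
        intro x
        have := h x
        simp only [zero_mul, zero_add] at this ⊢
        linarith
      have : Tendsto (fun x : ℝ => B * Real.exp (a₂ * x ^ 2 + b₂ * x + c₂)) atTop
          (𝓝 (C - A * Real.exp c₁)) := by
        rw [funext hconst]; exact tendsto_const_nhds
      have h0 : C - A * Real.exp c₁ = 0 := tendsto_nhds_unique this (lim2 ha2)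
      have := hconst 0
      nlinarith [Real.exp_pos (a₂ * (0:ℝ) ^ 2 + b₂ * 0 + c₂)]
    · exact ⟨ha1, hb1', ha2, hb2'⟩

/-- The two-component univariate Gaussian mixture density. -/
noncomputable def mixf (α μ₁ μ₂ σ₁ σ₂ x : ℝ) : ℝ :=
  α / (Real.sqrt (2 * Real.pi) * σ₁) * Real.exp (-(x - μ₁) ^ 2 / (2 * σ₁ ^ 2)) +
    (1 - α) / (Real.sqrt (2 * Real.pi) * σ₂) * Real.exp (-(x - μ₂) ^ 2 / (2 * σ₂ ^ 2))

/-- The two-component Gaussian mixture density reduces to a single Gaussian density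
exactly in the trivial cases α = 0, α = 1, or (μ₁,σ₁) = (μ₂,σ₂). -/
theorem mixture_is_gaussian_iff_trivial (α μ₁ μ₂ σ₁ σ₂ : ℝ)
    (hα : 0 ≤ α ∧ α ≤ 1) (hσ₁ : 0 < σ₁) (hσ₂ : 0 < σ₂) :
    (∃ m s : ℝ, 0 < s ∧ ∀ x : ℝ, mixf α μ₁ μ₂ σ₁ σ₂ x =
        1 / (Real.sqrt (2 * Real.pi) * s) * Real.exp (-(x - m) ^ 2 / (2 * s ^ 2))) ↔
      (α = 0 ∨ α = 1 ∨ (μ₁ = μ₂ ∧ σ₁ = σ₂)) := by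
  have hsqrt : 0 < Real.sqrt (2 * Real.pi) :=
    Real.sqrt_pos.mpr (by positivity)
  constructor
  · rintro ⟨m, s, hs, heq⟩
    rcases eq_or_lt_of_le hα.1 with h0 | h0
    · exact Or.inl h0.symm
    rcases eq_or_lt_of_le hα.2 with h1 | h1
    · exact Or.inr (Or.inl h1)
    refine Or.inr (Or.inr ?_)
    set A := α / (Real.sqrt (2 * Real.pi) * σ₁) with hAdef
    set B := (1 - α) / (Real.sqrt (2 * Real.pi) * σ₂) with hBdef
    set C := 1 / (Real.sqrt (2 * Real.pi) * s) with hCdef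
    have hA : 0 < A := by positivity
    have hB : 0 < B := by
      have : 0 < 1 - α := by linarith
      positivity
    have hs' : s ≠ 0 := ne_of_gt hs
    have hσ₁' : σ₁ ≠ 0 := ne_of_gt hσ₁
    have hσ₂' : σ₂ ≠ 0 := ne_of_gt hσ₂
    have hexp1 : ∀ x : ℝ, (1 / (2 * s ^ 2) - 1 / (2 * σ₁ ^ 2)) * x ^ 2
        + (μ₁ / σ₁ ^ 2 - m / s ^ 2) * x + (m ^ 2 / (2 * s ^ 2) - μ₁ ^ 2 / (2 * σ₁ ^ 2))
        = -(x - μ₁) ^ 2 / (2 * σ₁ ^ 2) + (x - m) ^ 2 / (2 * s ^ 2) := by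
      intro x; field_simp; ring
    have hexp2 : ∀ x : ℝ, (1 / (2 * s ^ 2) - 1 / (2 * σ₂ ^ 2)) * x ^ 2
        + (μ₂ / σ₂ ^ 2 - m / s ^ 2) * x + (m ^ 2 / (2 * s ^ 2) - μ₂ ^ 2 / (2 * σ₂ ^ 2))
        = -(x - μ₂) ^ 2 / (2 * σ₂ ^ 2) + (x - m) ^ 2 / (2 * s ^ 2) := by
      intro x; field_simp; ring
    have key : ∀ x : ℝ,
        A * Real.exp ((1 / (2 * s ^ 2) - 1 / (2 * σ₁ ^ 2)) * x ^ 2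
          + (μ₁ / σ₁ ^ 2 - m / s ^ 2) * x + (m ^ 2 / (2 * s ^ 2) - μ₁ ^ 2 / (2 * σ₁ ^ 2)))
        + B * Real.exp ((1 / (2 * s ^ 2) - 1 / (2 * σ₂ ^ 2)) * x ^ 2
          + (μ₂ / σ₂ ^ 2 - m / s ^ 2) * x + (m ^ 2 / (2 * s ^ 2) - μ₂ ^ 2 / (2 * σ₂ ^ 2))) = C := by
      intro x
      have h1 := heq x
      unfold mixf at h1
      rw [hexp1 x, hexp2 x, Real.exp_add, Real.exp_add]
      have h2 : (A * Real.exp (-(x - μ₁) ^ 2 / (2 * σ₁ ^ 2))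
          + B * Real.exp (-(x - μ₂) ^ 2 / (2 * σ₂ ^ 2)))
          = C * Real.exp (-(x - m) ^ 2 / (2 * s ^ 2)) := h1
      have h3 : Real.exp (-(x - m) ^ 2 / (2 * s ^ 2)) * Real.exp ((x - m) ^ 2 / (2 * s ^ 2))
          = 1 := by
        rw [← Real.exp_add]
        ring_nf
        exact Real.exp_zero
      calc A * (Real.exp (-(x - μ₁) ^ 2 / (2 * σ₁ ^ 2)) * Real.exp ((x - m) ^ 2 / (2 * s ^ 2)))
            + B * (Real.exp (-(x - μ₂) ^ 2 / (2 * σ₂ ^ 2)) * Real.exp ((x - m) ^ 2 / (2 * s ^ 2)))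
          = (A * Real.exp (-(x - μ₁) ^ 2 / (2 * σ₁ ^ 2))
              + B * Real.exp (-(x - μ₂) ^ 2 / (2 * σ₂ ^ 2)))
              * Real.exp ((x - m) ^ 2 / (2 * s ^ 2)) := by ring
        _ = C * (Real.exp (-(x - m) ^ 2 / (2 * s ^ 2)) * Real.exp ((x - m) ^ 2 / (2 * s ^ 2))) := by
              rw [h2]; ring
        _ = C := by rw [h3, mul_one]
    obtain ⟨ha1, hb1, ha2, hb2⟩ := two_exp_const hA hB key
    have hs1 : s = σ₁ := by
      have hsq : s ^ 2 = σ₁ ^ 2 := by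
        field_simp at ha1
        linarith
      nlinarith
    have hs2 : s = σ₂ := by
      have hsq : s ^ 2 = σ₂ ^ 2 := by
        field_simp at ha2
        linarith
      nlinarith
    clear key heq hexp1 hexp2
    have hm1 : μ₁ = m := by
      rw [hs1] at hb1
      rw [div_sub_div_same, div_eq_zero_iff] at hb1
      rcases hb1 with h | h
      · linarith
      · exact absurd h (by positivity)
    have hm2 : μ₂ = m := by
      rw [hs2] at hb2
      rw [div_sub_div_same, div_eq_zero_iff] at hb2
      rcases hb2 with h | h
      · linarith
      · exact absurd h (by positivity)
    exact ⟨hm1.trans hm2.symm, hs1 ▸ hs2⟩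
  · rintro (h0 | h1 | ⟨hμ, hσ⟩)
    · refine ⟨μ₂, σ₂, hσ₂, fun x => ?_⟩
      unfold mixf
      rw [h0]
      simp
    · refine ⟨μ₁, σ₁, hσ₁, fun x => ?_⟩
      unfold mixf
      rw [h1]
      simp
    · refine ⟨μ₁, σ₁, hσ₁, fun x => ?_⟩
      unfold mixf
      rw [← hμ, ← hσ]
      have : Real.sqrt (2 * Real.pi) * σ₁ ≠ 0 := by positivity
      field_simp
      ring
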